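/- Let G be a connected threshold graph with c ≥ 3 type-1 vertices, z ≥ 1 type-0 vertices, and BZP sequence b₁, …, b_z; set F₁ = ∑ b_i². Then the spectral radius ρ of G satisfies ρ ≥ (c − 2 + √(c² + 4F₁/(c−1)))/2; equivalently ρ² − (c−2)ρ − (F₁/(c−1) + c − 1) ≥ 0. -/

import Mathlib

open Finset Matrix Pointwise

/-- Rayleigh quotient bound: for a real symmetric matrix, any number dominating the
real spectrum dominates every Rayleigh quotient. -/
lemma rayleigh_le_spec {n : Type*} [Fintype n] [DecidableEq n]
    (A : Matrix n n ℝ) (hA : A.IsHermitian) (ρ : ℝ)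
    (h : ∀ μ ∈ spectrum ℝ A, μ ≤ ρ) (x : n → ℝ) :
    x ⬝ᵥ (A *ᵥ x) ≤ ρ * (x ⬝ᵥ x) := by
  set B : Matrix n n ℝ := ρ • (1 : Matrix n n ℝ) - A with hBdef
  have hB : B.IsHermitian := by
    have h1 : (ρ • (1 : Matrix n n ℝ)).IsHermitian := by
      simp [Matrix.IsHermitian, Matrix.conjTranspose_smul]
    exact h1.sub hA
  have hev : ∀ i, 0 ≤ hB.eigenvalues i := by
    intro i
    have hmem := hB.eigenvalues_mem_spectrum_real i
    have hBalg : B = algebraMap ℝ (Matrix n n ℝ) ρ - A := by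
      rw [hBdef, Algebra.algebraMap_eq_smul_one]
    have hmem' : hB.eigenvalues i ∈ ({ρ} : Set ℝ) - spectrum ℝ A := by
      rw [spectrum.singleton_sub_eq, ← hBalg]; exact hmem
    obtain ⟨a, ha, μ, hμ, hsub⟩ := Set.mem_sub.mp hmem'
    rw [Set.mem_singleton_iff] at ha
    subst ha
    have := h μ hμ
    linarith [hsub, this]
  have hps := hB.posSemidef_iff_eigenvalues_nonneg.mpr (fun i => hev i)
  have h2 := hps.dotProduct_mulVec_nonneg x
  have hst : star x = x := by
    funext i; simp
  rw [hst, hBdef, Matrix.sub_mulVec, Matrix.smul_mulVec, Matrix.one_mulVec,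
    dotProduct_sub, dotProduct_smul, smul_eq_mul] at h2
  linarith

/-- Sum over `Fin c` of a two-valued step function. -/
lemma sum_ite_lt_const {c : ℕ} (m : ℕ) (hm : m ≤ c) (a e : ℝ) :
    ∑ j : Fin c, (if (j : ℕ) < m then a else e) = m * a + ((c : ℝ) - m) * e := by
  have h1 : ∀ j : Fin c, (if (j : ℕ) < m then a else e)
      = (if (j : ℕ) < m then a - e else 0) + e := by
    intro j; split <;> ring
  simp_rw [h1]
  rw [Finset.sum_add_distrib, Finset.sum_const, Finset.card_univ, Fintype.card_fin]
  have h2 : ∑ j : Fin c, (if (j : ℕ) < m then a - e else 0)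
      = ∑ t ∈ Finset.range c, (if t < m then a - e else 0) :=
    Fin.sum_univ_eq_sum_range (fun t => if t < m then a - e else 0) c
  rw [h2, ← Finset.sum_filter]
  have h3 : (Finset.range c).filter (fun t => t < m) = Finset.range m := by
    ext t; simp only [Finset.mem_filter, Finset.mem_range]; omega
  rw [h3, Finset.sum_const, Finset.card_range]
  ring

/-- A connected threshold graph with `c ≥ 3` type-1 vertices, `z ≥ 1` type-0
vertices and BZP sequence `b₁, …, b_z` (the `i`-th type-0 vertex joined to the first `b i`
vertices of the clique `K_c`) has spectral radius
`ρ ≥ (c − 2 + √(c² + 4F₁/(c−1)))/2`, where `F₁ = ∑ bᵢ²`. -/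
theorem threshold_quadratic_lower_bound (c z : ℕ) (hc : 3 ≤ c) (hz : 1 ≤ z)
    (hn : 4 ≤ c + z)
    (b : Fin z → ℕ) (hb : ∀ i, 1 ≤ b i ∧ b i ≤ c - 1)
    (hmono : ∀ i j : Fin z, i ≤ j → b j ≤ b i)
    (G : SimpleGraph (Fin (c + z))) [DecidableRel G.Adj]
    (hG : ∀ u v : Fin (c + z), G.Adj u v ↔ u ≠ v ∧
      ((u.1 < c ∧ v.1 < c) ∨
       (u.1 < c ∧ c ≤ v.1 ∧ u.1 < b ⟨v.1 - c, by have := v.isLt; omega⟩) ∨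
       (v.1 < c ∧ c ≤ u.1 ∧ v.1 < b ⟨u.1 - c, by have := u.isLt; omega⟩)))
    (hconn : G.Connected)
    (ρ : ℝ) (hρ₁ : ρ ∈ spectrum ℝ (G.adjMatrix ℝ))
    (hρ₂ : ∀ μ ∈ spectrum ℝ (G.adjMatrix ℝ), |μ| ≤ ρ) :
    ρ ≥ ((c : ℝ) - 2 +
        Real.sqrt ((c : ℝ) ^ 2 + 4 / ((c : ℝ) - 1) * ∑ i, (b i : ℝ) ^ 2)) / 2 := by
  classical
  have hc3 : (3 : ℝ) ≤ (c : ℝ) := by exact_mod_cast hc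
  set F : ℝ := ∑ i, (b i : ℝ) ^ 2 with hF
  have hF0 : 0 ≤ F := by rw [hF]; exact Finset.sum_nonneg fun i _ => sq_nonneg _
  set D : ℝ := (c : ℝ) ^ 2 + 4 / ((c : ℝ) - 1) * F with hD
  have hc1 : (0 : ℝ) < (c : ℝ) - 1 := by linarith
  have hCne : ((c : ℝ) - 1) ≠ 0 := ne_of_gt hc1
  have hDnn : 0 ≤ D := by
    rw [hD]
    have h4 : 0 ≤ 4 / ((c : ℝ) - 1) * F :=
      mul_nonneg (div_nonneg (by norm_num) (le_of_lt hc1)) hF0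
    nlinarith [sq_nonneg ((c : ℝ))]
  set r : ℝ := ((c : ℝ) - 2 + Real.sqrt D) / 2 with hrdef
  -- goal should now be ρ ≥ r
  have hsqrt_ge : (c : ℝ) ≤ Real.sqrt D := by
    have h1 : Real.sqrt ((c : ℝ) ^ 2) ≤ Real.sqrt D := by
      apply Real.sqrt_le_sqrt
      rw [hD]
      nlinarith [mul_nonneg (div_nonneg (by norm_num : (0:ℝ) ≤ 4) (le_of_lt hc1)) hF0]
    rwa [Real.sqrt_sq (by linarith : (0:ℝ) ≤ (c:ℝ))] at h1
  have hrC : (c : ℝ) - 1 ≤ r := by rw [hrdef]; linarith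
  have hr0 : (0 : ℝ) < r := by linarith
  -- the key quadratic identity for r
  have hkey2 : r ^ 2 * ((c : ℝ) - 1)
      = ((c : ℝ) - 2) * r * ((c : ℝ) - 1) + ((c : ℝ) - 1) ^ 2 + F := by
    have h1 : 2 * r - ((c : ℝ) - 2) = Real.sqrt D := by rw [hrdef]; ring
    have h2 : (2 * r - ((c : ℝ) - 2)) ^ 2 = (c : ℝ) ^ 2 + 4 / ((c : ℝ) - 1) * F := by
      rw [h1, Real.sq_sqrt hDnn, hD]
    field_simp at h2
    linear_combination (1 / 4) * h2
  -- the test vector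
  obtain ⟨x, hx1, hx2⟩ : ∃ x : Fin (c + z) → ℝ,
      (∀ j : Fin c, x (Fin.castAdd z j) = if (j : ℕ) < c - 1 then r else (c : ℝ) - 1) ∧
      (∀ i : Fin z, x (Fin.natAdd c i) = (b i : ℝ)) := by
    refine ⟨fun u => if h : (u : ℕ) < c then (if (u : ℕ) < c - 1 then r else (c : ℝ) - 1)
      else ((b ⟨(u : ℕ) - c, by have := u.isLt; omega⟩ : ℕ) : ℝ), fun j => ?_, fun i => ?_⟩
    · simp only [Fin.coe_castAdd]
      rw [dif_pos j.isLt]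
    · simp only [Fin.coe_natAdd]
      rw [dif_neg (by omega)]
      congr 1
      exact congrArg b (Fin.ext (by simp))
  -- adjacency facts
  have hAcc : ∀ j k : Fin c, G.Adj (Fin.castAdd z j) (Fin.castAdd z k) ↔ j ≠ k := by
    intro j k
    rw [hG]
    constructor
    · rintro ⟨hne, -⟩ rfl
      exact hne rfl
    · intro h
      refine ⟨fun hh => h (Fin.ext ?_), Or.inl ⟨j.isLt, k.isLt⟩⟩
      have := congrArg Fin.val hh
      simpa using this
  have hidx : ∀ (i : Fin z) (h : c + (i : ℕ) - c < z), (⟨c + (i : ℕ) - c, h⟩ : Fin z) = i := by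
    intro i h; apply Fin.ext; simp
  have hAcz : ∀ (j : Fin c) (i : Fin z),
      G.Adj (Fin.castAdd z j) (Fin.natAdd c i) ↔ (j : ℕ) < b i := by
    intro j i
    rw [hG]
    simp only [Fin.coe_castAdd, Fin.coe_natAdd]
    constructor
    · rintro ⟨-, ⟨-, h⟩ | ⟨-, -, h⟩ | ⟨h, -, -⟩⟩
      · omega
      · rwa [hidx] at h
      · omega
    · intro h
      refine ⟨fun hh => ?_, Or.inr (Or.inl ⟨j.isLt, Nat.le_add_right _ _, ?_⟩)⟩
      · have := congrArg Fin.val hh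
        simp only [Fin.coe_castAdd, Fin.coe_natAdd] at this
        omega
      · rwa [hidx]
  have hAzz : ∀ i i' : Fin z, ¬ G.Adj (Fin.natAdd c i) (Fin.natAdd c i') := by
    intro i i' h
    rw [hG] at h
    simp only [Fin.coe_natAdd] at h
    rcases h with ⟨-, ⟨h1, -⟩ | ⟨h1, -⟩ | ⟨h1, -⟩⟩ <;> omega
  have hAzc : ∀ (i : Fin z) (j : Fin c),
      G.Adj (Fin.natAdd c i) (Fin.castAdd z j) ↔ (j : ℕ) < b i := by
    intro i j
    rw [SimpleGraph.adj_comm]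
    exact hAcz j i
  -- casts
  have hcast1 : ((c - 1 : ℕ) : ℝ) = (c : ℝ) - 1 := by
    rw [Nat.cast_sub (by omega : 1 ≤ c)]; simp
  -- Hermitian adjacency matrix
  have hHerm : (G.adjMatrix ℝ).IsHermitian := by
    ext u v
    simp only [Matrix.conjTranspose_apply, SimpleGraph.adjMatrix_apply, star_trivial]
    by_cases h : G.Adj u v
    · rw [if_pos h.symm, if_pos h]
    · rw [if_neg (fun h' => h h'.symm), if_neg h]
  have hμle : ∀ μ ∈ spectrum ℝ (G.adjMatrix ℝ), μ ≤ ρ := fun μ hμ => (abs_le.mp (hρ₂ μ hμ)).2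
  have hray := rayleigh_le_spec (G.adjMatrix ℝ) hHerm ρ hμle x
  -- the quadratic form
  have hQform : x ⬝ᵥ ((G.adjMatrix ℝ) *ᵥ x)
      = ∑ u, ∑ v, (if G.Adj u v then x u * x v else 0) := by
    simp only [dotProduct, Matrix.mulVec, SimpleGraph.adjMatrix_apply]
    refine Finset.sum_congr rfl fun u _ => ?_
    rw [Finset.mul_sum]
    refine Finset.sum_congr rfl fun v _ => ?_
    split <;> ring
  -- block sums for the quadratic form
  have hT1 : (∑ j : Fin c, ∑ k : Fin c,
      (if G.Adj (Fin.castAdd z j) (Fin.castAdd z k)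
        then x (Fin.castAdd z j) * x (Fin.castAdd z k) else 0))
      = (((c:ℝ) - 1) * r + ((c:ℝ) - 1)) * (((c:ℝ) - 1) * r + ((c:ℝ) - 1))
        - (((c:ℝ) - 1) * (r * r) + (((c:ℝ) - 1) * ((c:ℝ) - 1))) := by
    have hS1 : ∑ j : Fin c, x (Fin.castAdd z j) = ((c:ℝ) - 1) * r + ((c:ℝ) - 1) := by
      simp_rw [hx1]
      rw [sum_ite_lt_const (c - 1) (by omega) r ((c:ℝ) - 1), hcast1]
      ring
    have hS2 : ∑ j : Fin c, x (Fin.castAdd z j) * x (Fin.castAdd z j)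
        = ((c:ℝ) - 1) * (r * r) + (((c:ℝ) - 1) * ((c:ℝ) - 1)) := by
      simp_rw [hx1]
      have h1 : ∀ j : Fin c,
          (if (j : ℕ) < c - 1 then r else (c:ℝ) - 1) * (if (j : ℕ) < c - 1 then r else (c:ℝ) - 1)
          = (if (j : ℕ) < c - 1 then r * r else ((c:ℝ) - 1) * ((c:ℝ) - 1)) := by
        intro j; split <;> ring
      simp_rw [h1]
      rw [sum_ite_lt_const (c - 1) (by omega) (r * r) (((c:ℝ) - 1) * ((c:ℝ) - 1)), hcast1]
      ring
    have hterm : ∀ j k : Fin c,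
        (if G.Adj (Fin.castAdd z j) (Fin.castAdd z k)
          then x (Fin.castAdd z j) * x (Fin.castAdd z k) else 0)
        = x (Fin.castAdd z j) * x (Fin.castAdd z k)
          - (if j = k then x (Fin.castAdd z j) * x (Fin.castAdd z k) else 0) := by
      intro j k
      by_cases h : j = k
      · subst h
        rw [if_neg (fun hadj => ((hAcc j j).1 hadj) rfl)]
        simp
      · rw [if_pos ((hAcc j k).2 h), if_neg h]
        ring
    simp_rw [hterm]
    rw [Finset.sum_congr rfl (fun j _ => Finset.sum_sub_distrib _ _), Finset.sum_sub_distrib]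
    have h2 : ∀ j : Fin c, ∑ k : Fin c,
        (if j = k then x (Fin.castAdd z j) * x (Fin.castAdd z k) else 0)
        = x (Fin.castAdd z j) * x (Fin.castAdd z j) := by
      intro j
      rw [Finset.sum_ite_eq]
      simp
    rw [Finset.sum_congr rfl (fun j _ => h2 j), hS2]
    have h3 : ∀ j : Fin c, ∑ k : Fin c, x (Fin.castAdd z j) * x (Fin.castAdd z k)
        = x (Fin.castAdd z j) * (((c:ℝ) - 1) * r + ((c:ℝ) - 1)) := by
      intro j
      rw [← Finset.mul_sum, hS1]
    rw [Finset.sum_congr rfl (fun j _ => h3 j), ← Finset.sum_mul, hS1]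
  have hcross : ∀ i : Fin z, ∑ j : Fin c,
      (if (j : ℕ) < b i then x (Fin.castAdd z j) * (b i : ℝ) else 0)
      = (b i : ℝ) * (r * (b i : ℝ)) := by
    intro i
    have h1 : ∀ j : Fin c,
        (if (j : ℕ) < b i then x (Fin.castAdd z j) * (b i : ℝ) else 0)
        = (if (j : ℕ) < b i then r * (b i : ℝ) else 0) := by
      intro j
      by_cases h : (j : ℕ) < b i
      · rw [if_pos h, if_pos h, hx1, if_pos (by have := (hb i).2; omega)]
      · rw [if_neg h, if_neg h]
    simp_rw [h1]
    rw [sum_ite_lt_const (b i) (by have := (hb i).2; omega) (r * (b i : ℝ)) 0]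
    ring
  have hT2 : (∑ j : Fin c, ∑ i : Fin z,
      (if G.Adj (Fin.castAdd z j) (Fin.natAdd c i)
        then x (Fin.castAdd z j) * x (Fin.natAdd c i) else 0)) = r * F := by
    rw [Finset.sum_comm]
    have h1 : ∀ i : Fin z, ∑ j : Fin c,
        (if G.Adj (Fin.castAdd z j) (Fin.natAdd c i)
          then x (Fin.castAdd z j) * x (Fin.natAdd c i) else 0)
        = (b i : ℝ) * (r * (b i : ℝ)) := by
      intro i
      have h2 : ∀ j : Fin c,
          (if G.Adj (Fin.castAdd z j) (Fin.natAdd c i)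
            then x (Fin.castAdd z j) * x (Fin.natAdd c i) else 0)
          = (if (j : ℕ) < b i then x (Fin.castAdd z j) * (b i : ℝ) else 0) := by
        intro j
        rw [hx2]
        by_cases h : (j : ℕ) < b i
        · rw [if_pos ((hAcz j i).2 h), if_pos h]
        · rw [if_neg (fun hadj => h ((hAcz j i).1 hadj)), if_neg h]
      simp_rw [h2]
      exact hcross i
    rw [Finset.sum_congr rfl (fun i _ => h1 i)]
    have h3 : ∀ i : Fin z, (b i : ℝ) * (r * (b i : ℝ)) = r * (b i : ℝ) ^ 2 := by
      intro i; ring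
    rw [Finset.sum_congr rfl (fun i _ => h3 i), ← Finset.mul_sum, ← hF]
  have hT3 : (∑ i : Fin z, ∑ j : Fin c,
      (if G.Adj (Fin.natAdd c i) (Fin.castAdd z j)
        then x (Fin.natAdd c i) * x (Fin.castAdd z j) else 0)) = r * F := by
    have h1 : ∀ i : Fin z, ∑ j : Fin c,
        (if G.Adj (Fin.natAdd c i) (Fin.castAdd z j)
          then x (Fin.natAdd c i) * x (Fin.castAdd z j) else 0)
        = (b i : ℝ) * (r * (b i : ℝ)) := by
      intro i
      have h2 : ∀ j : Fin c,
          (if G.Adj (Fin.natAdd c i) (Fin.castAdd z j)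
            then x (Fin.natAdd c i) * x (Fin.castAdd z j) else 0)
          = (if (j : ℕ) < b i then x (Fin.castAdd z j) * (b i : ℝ) else 0) := by
        intro j
        rw [hx2]
        by_cases h : (j : ℕ) < b i
        · rw [if_pos ((hAzc i j).2 h), if_pos h]
          ring
        · rw [if_neg (fun hadj => h ((hAzc i j).1 hadj)), if_neg h]
      simp_rw [h2]
      exact hcross i
    rw [Finset.sum_congr rfl (fun i _ => h1 i)]
    have h3 : ∀ i : Fin z, (b i : ℝ) * (r * (b i : ℝ)) = r * (b i : ℝ) ^ 2 := by
      intro i; ring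
    rw [Finset.sum_congr rfl (fun i _ => h3 i), ← Finset.mul_sum, ← hF]
  have hT4 : (∑ i : Fin z, ∑ i' : Fin z,
      (if G.Adj (Fin.natAdd c i) (Fin.natAdd c i')
        then x (Fin.natAdd c i) * x (Fin.natAdd c i') else 0)) = 0 := by
    apply Finset.sum_eq_zero
    intro i _
    apply Finset.sum_eq_zero
    intro i' _
    rw [if_neg (hAzz i i')]
  -- total quadratic form
  have hQ : x ⬝ᵥ ((G.adjMatrix ℝ) *ᵥ x)
      = (((c:ℝ) - 1) * r + ((c:ℝ) - 1)) * (((c:ℝ) - 1) * r + ((c:ℝ) - 1))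
        - (((c:ℝ) - 1) * (r * r) + (((c:ℝ) - 1) * ((c:ℝ) - 1))) + r * F + r * F := by
    rw [hQform, Fin.sum_univ_add]
    have h1 : ∀ u : Fin (c + z), (∑ v : Fin (c + z), (if G.Adj u v then x u * x v else 0))
        = (∑ k : Fin c, (if G.Adj u (Fin.castAdd z k) then x u * x (Fin.castAdd z k) else 0))
          + ∑ i : Fin z, (if G.Adj u (Fin.natAdd c i) then x u * x (Fin.natAdd c i) else 0) :=
      fun u => Fin.sum_univ_add _
    rw [Finset.sum_congr rfl (fun j _ => h1 (Fin.castAdd z j)),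
      Finset.sum_congr rfl (fun i _ => h1 (Fin.natAdd c i)),
      Finset.sum_add_distrib, Finset.sum_add_distrib, hT1, hT2, hT3, hT4]
    ring
  -- the norm
  have hN : x ⬝ᵥ x = (((c:ℝ) - 1) * (r * r) + (((c:ℝ) - 1) * ((c:ℝ) - 1))) + F := by
    have : x ⬝ᵥ x = ∑ u, x u * x u := rfl
    rw [this, Fin.sum_univ_add]
    have hS2 : ∑ j : Fin c, x (Fin.castAdd z j) * x (Fin.castAdd z j)
        = ((c:ℝ) - 1) * (r * r) + (((c:ℝ) - 1) * ((c:ℝ) - 1)) := by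
      simp_rw [hx1]
      have h1 : ∀ j : Fin c,
          (if (j : ℕ) < c - 1 then r else (c:ℝ) - 1) * (if (j : ℕ) < c - 1 then r else (c:ℝ) - 1)
          = (if (j : ℕ) < c - 1 then r * r else ((c:ℝ) - 1) * ((c:ℝ) - 1)) := by
        intro j; split <;> ring
      simp_rw [h1]
      rw [sum_ite_lt_const (c - 1) (by omega) (r * r) (((c:ℝ) - 1) * ((c:ℝ) - 1)), hcast1]
      ring
    have hS3 : ∑ i : Fin z, x (Fin.natAdd c i) * x (Fin.natAdd c i) = F := by
      simp_rw [hx2]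
      rw [hF]
      exact Finset.sum_congr rfl fun i _ => (sq ((b i : ℝ))).symm
    rw [hS2, hS3]
  -- conclude
  rw [hQ, hN] at hray
  have hNpos : (0:ℝ) < (((c:ℝ) - 1) * (r * r) + (((c:ℝ) - 1) * ((c:ℝ) - 1))) + F := by
    nlinarith
  have hQeq : (((c:ℝ) - 1) * r + ((c:ℝ) - 1)) * (((c:ℝ) - 1) * r + ((c:ℝ) - 1))
        - (((c:ℝ) - 1) * (r * r) + (((c:ℝ) - 1) * ((c:ℝ) - 1))) + r * F + r * F
      = r * ((((c:ℝ) - 1) * (r * r) + (((c:ℝ) - 1) * ((c:ℝ) - 1))) + F) := by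
    linear_combination (-r) * hkey2
  rw [hQeq] at hray
  have : r ≤ ρ := le_of_mul_le_mul_right (by linarith) hNpos
  exact this
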